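/- Let Z ∈ ℝ^{d_z×n} be partitioned into blocks Z₁,...,Z_k with Z_j ∈ ℝ^{d_z×n_j} and ∑_j n_j = n, and suppose Z_jᵀ Z_ℓ = 0 for all j ≠ ℓ. Then the rate reduction satisfies ΔR(Z | Π) = (1/(2n)) ∑_{j=1}^{k} ∑_{p} log[ (1 + (d_z/(nε²)) σ_p(Z_j)²)ⁿ / (1 + (d_z/(n_jε²)) σ_p(Z_j)²)^{n_j} ], where ΔR(Z | Π) := R(Z) − ∑_j (n_j/n) R(Z_j). -/

import Mathlib

open Matrix Finset

noncomputable def codingRate {d : ℕ} {m : Type*} [Fintype m] (ε : ℝ)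
    (Z : Matrix (Fin d) m ℝ) : ℝ :=
  (1 / 2) * Real.log ((1 + ((d : ℝ) / (Fintype.card m * ε ^ 2)) • (Z * Zᵀ)).det)

noncomputable def sval {d n : ℕ} (A : Matrix (Fin d) (Fin n) ℝ) : Fin n → ℝ :=
  fun p => Real.sqrt ((show (Aᵀ * A).IsHermitian by
      simpa [conjTranspose_eq_transpose_of_trivial] using Matrix.isHermitian_conjTranspose_mul_self A).eigenvalues
    (Tuple.sort ((show (Aᵀ * A).IsHermitian by
      simpa [conjTranspose_eq_transpose_of_trivial] using Matrix.isHermitian_conjTranspose_mul_self A).eigenvalues) p.rev))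

/-- The horizontal concatenation of a family of matrices `Z j : Matrix (Fin dz) (Fin (nj j)) ℝ`,
indexed by the sigma type of the column indices. -/
def blockConcat {dz k : ℕ} {nj : Fin k → ℕ}
    (Z : (j : Fin k) → Matrix (Fin dz) (Fin (nj j)) ℝ) :
    Matrix (Fin dz) ((j : Fin k) × Fin (nj j)) ℝ :=
  Matrix.of fun i q => Z q.1 i q.2

/-- det of blockDiagonal' over Fin-indexed blocks. -/
lemma det_blockDiagonal'_fin {k : ℕ} {nj : Fin k → ℕ}
    (M : (j : Fin k) → Matrix (Fin (nj j)) (Fin (nj j)) ℝ) :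
    (blockDiagonal' M).det = ∏ j, (M j).det := by
  rw [(blockTriangular_blockDiagonal' M).det_fintype]
  refine Finset.prod_congr rfl fun a _ => ?_
  let e : Fin (nj a) ≃ {x : (j : Fin k) × Fin (nj j) // x.1 = a} :=
    { toFun := fun p => ⟨⟨a, p⟩, rfl⟩
      invFun := fun x => Fin.cast (congrArg nj x.2) x.1.2
      left_inv := fun p => rfl
      right_inv := fun x => by obtain ⟨⟨j, p⟩, h⟩ := x; subst h; rfl }
  rw [← Matrix.det_submatrix_equiv_self e]
  congr 1
  ext p q
  show blockDiagonal' M ⟨a, p⟩ ⟨a, q⟩ = M a p q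
  exact blockDiagonal'_apply_eq M a p q

/-- eigen-decomposition determinant. -/
lemma det_one_add_smul_transpose_mul {d m : ℕ} (c : ℝ) (hc : 0 ≤ c)
    (A : Matrix (Fin d) (Fin m) ℝ) :
    (1 + c • (Aᵀ * A)).det = ∏ p : Fin m, (1 + c * sval A p ^ 2) := by
  have hAt : Aᵀ = Aᴴ := (Matrix.conjTranspose_eq_transpose_of_trivial A).symm
  set hM := (show (Aᵀ * A).IsHermitian by
      simpa [conjTranspose_eq_transpose_of_trivial] using Matrix.isHermitian_conjTranspose_mul_self A) with hMdef
  set U : Matrix (Fin m) (Fin m) ℝ := (hM.eigenvectorUnitary : Matrix (Fin m) (Fin m) ℝ) with hU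
  have hUU : U * star U = 1 := (Matrix.mem_unitaryGroup_iff).mp hM.eigenvectorUnitary.2
  have hspec : Aᴴ * A = U * Matrix.diagonal hM.eigenvalues * star U := by
    have := hM.spectral_theorem
    simpa [RCLike.ofReal_real_eq_id] using this
  have key : (1 : Matrix (Fin m) (Fin m) ℝ) + c • (Aᵀ * A)
      = U * Matrix.diagonal (fun i => 1 + c * hM.eigenvalues i) * star U := by
    have hdg : Matrix.diagonal (fun i => 1 + c * hM.eigenvalues i)
        = 1 + c • Matrix.diagonal hM.eigenvalues := by
      ext i j
      rcases eq_or_ne i j with rfl | h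
      · simp [Matrix.diagonal_apply_eq, Matrix.one_apply_eq]
      · simp [Matrix.diagonal_apply_ne _ h, Matrix.one_apply_ne h]
    rw [hdg, Matrix.mul_add, Matrix.add_mul, Matrix.mul_one, hUU,
      Matrix.mul_smul, Matrix.smul_mul, ← hspec, hAt]
  have hdetU : U.det * (star U).det = 1 := by
    rw [← Matrix.det_mul, hUU, Matrix.det_one]
  rw [key, Matrix.det_mul, Matrix.det_mul]
  rw [show U.det * (Matrix.diagonal fun i => 1 + c * hM.eigenvalues i).det * (star U).det
      = (U.det * (star U).det) * (Matrix.diagonal fun i => 1 + c * hM.eigenvalues i).det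
      from by ring, hdetU, one_mul, Matrix.det_diagonal]
  have hs : ∀ p : Fin m, sval A p ^ 2
      = hM.eigenvalues (Tuple.sort hM.eigenvalues p.rev) := fun p =>
    Real.sq_sqrt (Matrix.eigenvalues_conjTranspose_mul_self_nonneg A _)
  calc ∏ i, (1 + c * hM.eigenvalues i)
      = ∏ p, (1 + c * hM.eigenvalues ((Fin.revPerm.trans (Tuple.sort hM.eigenvalues)) p)) :=
        (Equiv.prod_comp (Fin.revPerm.trans (Tuple.sort hM.eigenvalues))
          (fun i => 1 + c * hM.eigenvalues i)).symm
    _ = ∏ p, (1 + c * sval A p ^ 2) := by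
        refine Finset.prod_congr rfl fun p _ => ?_
        rw [hs p]; rfl

lemma det_one_add_smul_mul_transpose {d m : ℕ} (c : ℝ) (hc : 0 ≤ c)
    (A : Matrix (Fin d) (Fin m) ℝ) :
    (1 + c • (A * Aᵀ)).det = ∏ p : Fin m, (1 + c * sval A p ^ 2) := by
  rw [← det_one_add_smul_transpose_mul c hc A, ← Matrix.mul_smul,
    Matrix.det_one_add_mul_comm, Matrix.smul_mul]

lemma blockConcat_transpose_mul {dz k : ℕ} {nj : Fin k → ℕ}
    (Z : (j : Fin k) → Matrix (Fin dz) (Fin (nj j)) ℝ)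
    (horth : ∀ j ℓ, j ≠ ℓ → (Z j)ᵀ * (Z ℓ) = 0) :
    (blockConcat Z)ᵀ * blockConcat Z = blockDiagonal' (fun j => (Z j)ᵀ * Z j) := by
  ext ⟨j, p⟩ ⟨l, q⟩
  rcases eq_or_ne j l with rfl | h
  · rw [blockDiagonal'_apply_eq]
    simp [Matrix.mul_apply, blockConcat, Matrix.transpose_apply]
  · rw [blockDiagonal'_apply_ne _ _ _ h]
    have h0 := congrFun (congrFun (horth j l h) p) q
    simpa [Matrix.mul_apply, blockConcat, Matrix.transpose_apply] using h0

lemma codingRate_fin {d m : ℕ} (ε : ℝ) (A : Matrix (Fin d) (Fin m) ℝ)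
    (hc : 0 ≤ (d : ℝ) / (m * ε ^ 2)) :
    codingRate ε A = (1 / 2) * ∑ p, Real.log (1 + ((d : ℝ) / (m * ε ^ 2)) * sval A p ^ 2) := by
  unfold codingRate
  rw [Fintype.card_fin, det_one_add_smul_mul_transpose _ hc A, Real.log_prod]
  intro p _
  have h1 : 0 ≤ ((d : ℝ) / (m * ε ^ 2)) * sval A p ^ 2 :=
    mul_nonneg hc (sq_nonneg _)
  nlinarith

lemma codingRate_blockConcat {dz k n : ℕ} (ε : ℝ) (nj : Fin k → ℕ) (hn : n = ∑ j, nj j)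
    (Z : (j : Fin k) → Matrix (Fin dz) (Fin (nj j)) ℝ)
    (horth : ∀ j ℓ, j ≠ ℓ → (Z j)ᵀ * (Z ℓ) = 0)
    (hc : 0 ≤ (dz : ℝ) / (n * ε ^ 2)) :
    codingRate ε (blockConcat Z)
      = (1 / 2) * ∑ j, ∑ p, Real.log (1 + ((dz : ℝ) / (n * ε ^ 2)) * sval (Z j) p ^ 2) := by
  unfold codingRate
  have hcard : (Fintype.card ((j : Fin k) × Fin (nj j)) : ℝ) = (n : ℝ) := by
    rw [Fintype.card_sigma]
    simp [hn]
  rw [hcard]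
  set c := (dz : ℝ) / (n * ε ^ 2) with hcdef
  have h1 : (1 + c • (blockConcat Z * (blockConcat Z)ᵀ)).det
      = ∏ j, ∏ p, (1 + c * sval (Z j) p ^ 2) := by
    rw [show c • (blockConcat Z * (blockConcat Z)ᵀ)
          = blockConcat Z * (c • (blockConcat Z)ᵀ) from (Matrix.mul_smul _ _ _).symm,
      Matrix.det_one_add_mul_comm, Matrix.smul_mul, blockConcat_transpose_mul Z horth]
    have h2 : (1 : Matrix _ _ ℝ) + c • blockDiagonal' (fun j => (Z j)ᵀ * Z j)
        = blockDiagonal' (fun j => 1 + c • ((Z j)ᵀ * Z j)) := by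
      have hfun : (fun j => (1 : Matrix (Fin (nj j)) (Fin (nj j)) ℝ) + c • ((Z j)ᵀ * Z j))
          = (1 + c • fun j => (Z j)ᵀ * Z j) := rfl
      rw [hfun, blockDiagonal'_add, blockDiagonal'_one, blockDiagonal'_smul]
    rw [h2, det_blockDiagonal'_fin]
    exact Finset.prod_congr rfl fun j _ => det_one_add_smul_transpose_mul c hc (Z j)
  rw [h1, Real.log_prod (fun j _ => (Finset.prod_pos fun p _ => by
    nlinarith [mul_nonneg hc (sq_nonneg (sval (Z j) p))]).ne')]
  congr 1
  refine Finset.sum_congr rfl fun j _ => ?_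
  rw [Real.log_prod]
  intro p _
  nlinarith [mul_nonneg hc (sq_nonneg (sval (Z j) p))]

/-- When the blocks are pairwise orthogonal, the rate reduction ΔR(Z | Π) equals the
closed-form expression in terms of the singular values of the blocks. -/
theorem stmt11 {dz k n : ℕ} (ε : ℝ) (hε : 0 < ε) (nj : Fin k → ℕ)
    (hnj : ∀ j, 0 < nj j) (hn : n = ∑ j, nj j)
    (Z : (j : Fin k) → Matrix (Fin dz) (Fin (nj j)) ℝ)
    (horth : ∀ j ℓ, j ≠ ℓ → (Z j)ᵀ * (Z ℓ) = 0) :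
    codingRate ε (blockConcat Z) - ∑ j, ((nj j : ℝ) / (n : ℝ)) * codingRate ε (Z j)
      = (1 / (2 * (n : ℝ))) * ∑ j, ∑ p : Fin (nj j),
          Real.log ((1 + ((dz : ℝ) / (n * ε ^ 2)) * (sval (Z j) p) ^ 2) ^ n
            / (1 + ((dz : ℝ) / (nj j * ε ^ 2)) * (sval (Z j) p) ^ 2) ^ (nj j)) := by
  rcases Nat.eq_zero_or_pos n with hn0 | hnpos
  · -- degenerate case : n = 0 forces k = 0
    have hsum : ∑ j, nj j = 0 := by omega
    haveI hk : IsEmpty (Fin k) :=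
      ⟨fun j => absurd ((Finset.sum_eq_zero_iff.mp hsum) j (Finset.mem_univ j)) (hnj j).ne'⟩
    have hW : blockConcat Z * (blockConcat Z)ᵀ = 0 := by
      ext i i'
      rw [Matrix.mul_apply]
      simp [Finset.univ_eq_empty]
    simp [codingRate, hW, Finset.univ_eq_empty]
  · have hnpos' : (0 : ℝ) < (n : ℝ) := by exact_mod_cast hnpos
    have ha : 0 ≤ (dz : ℝ) / (n * ε ^ 2) := by positivity
    have hZr : ∀ j, codingRate ε (Z j)
        = (1 / 2) * ∑ p, Real.log (1 + ((dz : ℝ) / (nj j * ε ^ 2)) * sval (Z j) p ^ 2) :=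
      fun j => codingRate_fin ε (Z j) (by positivity)
    rw [codingRate_blockConcat ε nj hn Z horth ha]
    simp only [hZr]
    rw [Finset.mul_sum, Finset.mul_sum, ← Finset.sum_sub_distrib]
    refine Finset.sum_congr rfl fun j _ => ?_
    have hb : 0 ≤ (dz : ℝ) / ((nj j) * ε ^ 2) := by positivity
    have hT : ∑ p : Fin (nj j),
        Real.log ((1 + ((dz : ℝ) / (n * ε ^ 2)) * (sval (Z j) p) ^ 2) ^ n
          / (1 + ((dz : ℝ) / (nj j * ε ^ 2)) * (sval (Z j) p) ^ 2) ^ (nj j))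
        = (n : ℝ) * ∑ p, Real.log (1 + ((dz : ℝ) / (n * ε ^ 2)) * sval (Z j) p ^ 2)
          - (nj j : ℝ) * ∑ p, Real.log (1 + ((dz : ℝ) / (nj j * ε ^ 2)) * sval (Z j) p ^ 2) := by
      rw [Finset.mul_sum, Finset.mul_sum, ← Finset.sum_sub_distrib]
      refine Finset.sum_congr rfl fun p _ => ?_
      have hx : (0:ℝ) < 1 + ((dz : ℝ) / (n * ε ^ 2)) * sval (Z j) p ^ 2 := by
        nlinarith [mul_nonneg ha (sq_nonneg (sval (Z j) p))]
      have hy : (0:ℝ) < 1 + ((dz : ℝ) / (nj j * ε ^ 2)) * sval (Z j) p ^ 2 := by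
        nlinarith [mul_nonneg hb (sq_nonneg (sval (Z j) p))]
      rw [Real.log_div (pow_ne_zero _ hx.ne') (pow_ne_zero _ hy.ne'),
        Real.log_pow, Real.log_pow]
    rw [hT]
    generalize (∑ p : Fin (nj j),
      Real.log (1 + ((dz : ℝ) / (n * ε ^ 2)) * sval (Z j) p ^ 2)) = Sa
    generalize (∑ p : Fin (nj j),
      Real.log (1 + ((dz : ℝ) / (nj j * ε ^ 2)) * sval (Z j) p ^ 2)) = Sb
    field_simp
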